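/- Let F be a division ring which is finite-dimensional over its center, and let n ≥ 1. Then every ring automorphism φ of the matrix ring Mₙ(F) can be written as φ = Ad_a ∘ ψ̂, where a is an invertible element of Mₙ(F), Ad_a denotes conjugation x ↦ a x a⁻¹, ψ is a ring automorphism of F, and ψ̂ is the automorphism of Mₙ(F) applying ψ to each matrix entry. -/

import Mathlib

open Matrix

lemma aux_sandwich {n : Type*} [Fintype n] [DecidableEq n] {α : Type*} [Semiring α]
    (i j k l : n) (X : Matrix n n α) :
    single i j (1:α) * X * single k l (1:α) = single i l (X j k) := by
  ext a b
  simp [Matrix.mul_apply, Matrix.single, ite_and, boole_mul, mul_boole,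
    Finset.sum_ite_eq, Finset.sum_ite_eq']
  aesop

lemma aux_sum_diag {n : Type*} [Fintype n] [DecidableEq n] {α : Type*} [Semiring α] :
    ∑ i : n, single i i (1:α) = 1 := by
  ext a b
  simp [Matrix.sum_apply, Matrix.single, ite_and, Finset.sum_ite_eq, Matrix.one_apply]

section Main
variable {F : Type*} [DivisionRing F] {n : ℕ} [NeZero n]

-- basic matrix unit relations
lemma aux_units_mul (φ : Matrix (Fin n) (Fin n) F ≃+* Matrix (Fin n) (Fin n) F)
    (i j l : Fin n) :
    φ (single i j 1) * φ (single j l 1) = φ (single i l 1) := by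
  rw [← _root_.map_mul]
  congr 1
  simpa using Matrix.single_mul_single_same (1:F) i j l (1:F)

lemma aux_units_mul_ne (φ : Matrix (Fin n) (Fin n) F ≃+* Matrix (Fin n) (Fin n) F)
    {i j k l : Fin n} (h : j ≠ k) :
    φ (single i j 1) * φ (single k l 1) = 0 := by
  rw [← _root_.map_mul, Matrix.single_mul_single_of_ne (1:F) i j k h, _root_.map_zero]

lemma aux_units_sum (φ : Matrix (Fin n) (Fin n) F ≃+* Matrix (Fin n) (Fin n) F) :
    ∑ i : Fin n, φ (single i i 1) = 1 := by
  rw [← map_sum, aux_sum_diag, _root_.map_one]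

end Main

section Main2
variable {F : Type*} [DivisionRing F] {n : ℕ} [NeZero n]

noncomputable def uMat (φ : Matrix (Fin n) (Fin n) F ≃+* Matrix (Fin n) (Fin n) F)
    (c : Fin n) : Matrix (Fin n) (Fin n) F :=
  ∑ l : Fin n, φ (single l 0 1) * single c l (1:F)

noncomputable def tMat (φ : Matrix (Fin n) (Fin n) F ≃+* Matrix (Fin n) (Fin n) F)
    (k c : Fin n) : Matrix (Fin n) (Fin n) F :=
  (φ (single 0 0 1) k c)⁻¹ •
    ∑ j : Fin n, single j k (1:F) * φ (single 0 j 1)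

lemma tMat_mul_uMat (φ : Matrix (Fin n) (Fin n) F ≃+* Matrix (Fin n) (Fin n) F)
    {k c : Fin n} (hkc : φ (single 0 0 1) k c ≠ 0) :
    tMat φ k c * uMat φ c = 1 := by
  rw [tMat, uMat, Matrix.smul_mul, Finset.sum_mul_sum]
  have hterm : ∀ j l : Fin n,
      (single j k (1:F) * φ (single 0 j 1)) *
        (φ (single l 0 1) * single c l (1:F)) =
      if l = j then single j j (φ (single 0 0 1) k c) else 0 := by
    intro j l
    by_cases h : l = j
    · subst h
      rw [if_pos rfl]
      calc single l k (1:F) * φ (single 0 l 1) *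
            (φ (single l 0 1) * single c l (1:F))
          = single l k (1:F) *
              (φ (single 0 l 1) * φ (single l 0 1)) *
              single c l (1:F) := by noncomm_ring
        _ = single l k (1:F) * φ (single 0 0 1) * single c l (1:F) := by
              rw [aux_units_mul]
        _ = single l l (φ (single 0 0 1) k c) := aux_sandwich _ _ _ _ _
    · rw [if_neg h]
      calc single j k (1:F) * φ (single 0 j 1) *
            (φ (single l 0 1) * single c l (1:F))
          = single j k (1:F) *
              (φ (single 0 j 1) * φ (single l 0 1)) *
              single c l (1:F) := by noncomm_ring
        _ = 0 := by rw [aux_units_mul_ne φ (fun hjl => h hjl.symm)]; noncomm_ring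
  calc (φ (single 0 0 1) k c)⁻¹ •
        ∑ j : Fin n, ∑ l : Fin n,
          (single j k (1:F) * φ (single 0 j 1)) *
            (φ (single l 0 1) * single c l (1:F))
      = (φ (single 0 0 1) k c)⁻¹ •
        ∑ j : Fin n, single j j (φ (single 0 0 1) k c) := by
          congr 1
          refine Finset.sum_congr rfl fun j _ => ?_
          rw [Finset.sum_congr rfl fun l _ => hterm j l, Finset.sum_ite_eq']
          simp
    _ = 1 := by
          rw [Finset.smul_sum]
          simp only [Matrix.smul_single, smul_eq_mul, inv_mul_cancel₀ hkc]
          exact aux_sum_diag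

lemma units_mul_uMat (φ : Matrix (Fin n) (Fin n) F ≃+* Matrix (Fin n) (Fin n) F)
    (c : Fin n) (i j : Fin n) :
    φ (single i j 1) * uMat φ c = uMat φ c * single i j 1 := by
  rw [uMat, Finset.mul_sum, Finset.sum_mul]
  have h1 : ∀ l : Fin n,
      φ (single i j 1) * (φ (single l 0 1) * single c l (1:F)) =
      if l = j then φ (single i 0 1) * single c j (1:F) else 0 := by
    intro l
    by_cases h : l = j
    · subst h
      rw [if_pos rfl, ← mul_assoc, aux_units_mul]
    · rw [if_neg h, ← mul_assoc, aux_units_mul_ne φ (fun hjl => h hjl.symm), zero_mul]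
  have h2 : ∀ l : Fin n,
      φ (single l 0 1) * single c l (1:F) * single i j 1 =
      if l = i then φ (single i 0 1) * single c j (1:F) else 0 := by
    intro l
    by_cases h : l = i
    · subst h
      rw [if_pos rfl, mul_assoc]
      congr 1
      simpa using Matrix.single_mul_single_same (1:F) c l j (1:F)
    · rw [if_neg h, mul_assoc, Matrix.single_mul_single_of_ne (1:F) c l i (fun hli => h hli) (1:F),
        mul_zero]
  rw [Finset.sum_congr rfl fun l _ => h1 l, Finset.sum_congr rfl fun l _ => h2 l,
    Finset.sum_ite_eq', Finset.sum_ite_eq']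
  simp

end Main2

lemma aux_dedekind {k A : Type*} [Field k] [Ring A] [Algebra k A] [FiniteDimensional k A]
    {t u : A} (h : t * u = 1) : u * t = 1 := by
  have hinj : Function.Injective (LinearMap.mulLeft k u) := by
    intro x y hxy
    simp only [LinearMap.mulLeft_apply] at hxy
    calc x = (t * u) * x := by rw [h, one_mul]
    _ = (t * u) * y := by rw [mul_assoc, hxy, ← mul_assoc]
    _ = y := by rw [h, one_mul]
  obtain ⟨s, hs⟩ := (LinearMap.injective_iff_surjective.mp hinj) 1
  simp only [LinearMap.mulLeft_apply] at hs
  have hts : t = s := by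
    calc t = t * (u * s) := by rw [hs, mul_one]
    _ = (t * u) * s := by rw [mul_assoc]
    _ = s := by rw [h, one_mul]
  rw [hts, hs]

set_option maxHeartbeats 1000000 in
/-- Every ring automorphism of `Mₙ(F)`, for `F` a division ring
finite-dimensional over its center, is the composition of an inner automorphism with an
automorphism applied entrywise. -/
theorem matrix_ring_aut_eq_inner_comp_entrywise
    (F : Type*) [DivisionRing F] [FiniteDimensional (Subring.center F) F]
    (n : ℕ) (hn : 1 ≤ n)
    (φ : Matrix (Fin n) (Fin n) F ≃+* Matrix (Fin n) (Fin n) F) :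
    ∃ (a : (Matrix (Fin n) (Fin n) F)ˣ) (ψ : F ≃+* F),
      ∀ x : Matrix (Fin n) (Fin n) F,
        φ x = a.val * x.map ⇑ψ * (a⁻¹).val := by
  haveI : NeZero n := ⟨Nat.one_le_iff_ne_zero.mp hn⟩
  -- the image of the (0,0) matrix unit is nonzero
  have hf00 : φ (single (0 : Fin n) 0 (1:F)) ≠ 0 := by
    intro h
    have hE : (single 0 0 (1:F) : Matrix (Fin n) (Fin n) F) = 0 :=
      φ.injective (h.trans (_root_.map_zero φ).symm)
    have := congrFun (congrFun hE 0) 0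
    simp [Matrix.single_apply_same] at this
  obtain ⟨k, c, hkc⟩ : ∃ k c, φ (single (0 : Fin n) 0 (1:F)) k c ≠ 0 := by
    by_contra h
    push_neg at h
    exact hf00 (by ext a b; simpa using h a b)
  set u : Matrix (Fin n) (Fin n) F := uMat φ c with hu
  set t : Matrix (Fin n) (Fin n) F := tMat φ k c with ht
  have htu : t * u = 1 := tMat_mul_uMat φ hkc
  have hut : u * t = 1 := aux_dedekind (k := Subring.center F) htu
  have hfu : ∀ i j, φ (single i j 1) * u = u * single i j 1 :=
    units_mul_uMat φ c
  have htf : ∀ i j : Fin n, t * φ (single i j 1) = single i j 1 * t := by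
    intro i j
    calc t * φ (single i j 1)
        = t * φ (single i j 1) * (u * t) := by rw [hut, mul_one]
      _ = t * (φ (single i j 1) * u) * t := by noncomm_ring
      _ = t * (u * single i j 1) * t := by rw [hfu]
      _ = (t * u) * (single i j 1 * t) := by noncomm_ring
      _ = single i j 1 * t := by rw [htu, one_mul]
  have h00 : ∀ d : F, (single 0 0 (1:F) : Matrix (Fin n) (Fin n) F) * (single 0 0 d : Matrix (Fin n) (Fin n) F) *
      (single 0 0 (1:F) : Matrix (Fin n) (Fin n) F) = single 0 0 d := by
    intro d
    rw [aux_sandwich]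
    simp
  have hfix : ∀ z : Matrix (Fin n) (Fin n) F,
      single (0 : Fin n) 0 (1:F) * (t * φ z * u) * single 0 0 (1:F)
        = t * φ (single (0 : Fin n) 0 (1:F) * z * single 0 0 (1:F)) * u := by
    intro z
    calc single (0 : Fin n) 0 (1:F) * (t * φ z * u) * single 0 0 (1:F)
        = (single (0 : Fin n) 0 (1:F) * t) * φ z *
            (u * single 0 0 (1:F)) := by noncomm_ring
      _ = (t * φ (single 0 0 1)) * φ z * (φ (single 0 0 1) * u) := by
            rw [htf, hfu]
      _ = t * (φ (single 0 0 1) * φ z * φ (single 0 0 1)) * u := by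
            noncomm_ring
      _ = t * φ (single (0 : Fin n) 0 (1:F) * z * single 0 0 (1:F)) * u := by
            rw [_root_.map_mul, _root_.map_mul]
  set ψ₀ : F → F := fun d => (t * φ (single 0 0 d) * u) 0 0 with hψ₀
  have hS : ∀ d : F, t * φ (single 0 0 d) * u = single 0 0 (ψ₀ d) := by
    intro d
    have h1 := hfix (single 0 0 d)
    rw [h00 d] at h1
    rw [aux_sandwich] at h1
    exact h1.symm
  have hSinj : ∀ a b : F, (single 0 0 a : Matrix (Fin n) (Fin n) F)
      = (single 0 0 b : Matrix (Fin n) (Fin n) F) → a = b := by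
    intro a b h
    have := congrFun (congrFun h 0) 0
    simpa using this
  have hmulS : ∀ d e : F, (single 0 0 d : Matrix (Fin n) (Fin n) F) *
      (single 0 0 e : Matrix (Fin n) (Fin n) F)
      = single 0 0 (d * e) := fun d e =>
    Matrix.single_mul_single_same d 0 0 0 e
  have hψone : ψ₀ 1 = 1 := by
    apply hSinj
    rw [← hS]
    calc t * φ (single 0 0 1) * u
        = (single (0 : Fin n) 0 (1:F) * t) * u := by rw [htf]
      _ = single (0 : Fin n) 0 (1:F) * (t * u) := by noncomm_ring
      _ = single (0 : Fin n) 0 (1:F) := by rw [htu, mul_one]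
  have hψmul : ∀ d e : F, ψ₀ (d * e) = ψ₀ d * ψ₀ e := by
    intro d e
    apply hSinj
    rw [← hS]
    calc t * φ (single 0 0 (d * e)) * u
        = t * (φ (single 0 0 d) * φ (single 0 0 e)) * u := by
          rw [← hmulS, _root_.map_mul]
      _ = (t * φ (single 0 0 d) * u) * (t * φ (single 0 0 e) * u) := by
          calc t * (φ (single 0 0 d) * φ (single 0 0 e)) * u
              = t * φ (single 0 0 d) * (u * t) * φ (single 0 0 e) * u := by
                rw [hut]; noncomm_ring
            _ = (t * φ (single 0 0 d) * u) * (t * φ (single 0 0 e) * u) := by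
                noncomm_ring
      _ = single 0 0 (ψ₀ d) * single 0 0 (ψ₀ e) := by rw [hS, hS]
      _ = single 0 0 (ψ₀ d * ψ₀ e) := hmulS _ _
  have hψzero : ψ₀ 0 = 0 := by
    simp [hψ₀]
  have hψadd : ∀ d e : F, ψ₀ (d + e) = ψ₀ d + ψ₀ e := by
    intro d e
    simp only [hψ₀, Matrix.single_add, _root_.map_add, add_mul, mul_add,
      Matrix.add_apply]
  set ψhom : F →+* F :=
    { toFun := ψ₀, map_one' := hψone, map_mul' := hψmul,
      map_zero' := hψzero, map_add' := hψadd } with hψhom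
  have hsurj : Function.Surjective ψ₀ := by
    intro e
    set z : Matrix (Fin n) (Fin n) F :=
      φ.symm (u * single 0 0 e * t) with hz
    have hφz : φ z = u * single 0 0 e * t := φ.apply_symm_apply _
    have hz2 : single (0 : Fin n) 0 (1:F) * z * single 0 0 (1:F) = z := by
      apply φ.injective
      rw [_root_.map_mul, _root_.map_mul, hφz]
      calc φ (single 0 0 1) * (u * single 0 0 e * t) * φ (single 0 0 1)
          = (φ (single 0 0 1) * u) * single 0 0 e *
              (t * φ (single 0 0 1)) := by noncomm_ring
        _ = (u * single 0 0 1) * single 0 0 e *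
              (single 0 0 1 * t) := by rw [hfu, htf]
        _ = u * ((single 0 0 (1:F) : Matrix (Fin n) (Fin n) F) * (single 0 0 e : Matrix (Fin n) (Fin n) F) *
              (single 0 0 (1:F) : Matrix (Fin n) (Fin n) F)) * t := by noncomm_ring
        _ = u * single 0 0 e * t := by rw [h00]
    have hz3 : z = single 0 0 (z 0 0) := by
      conv_lhs => rw [← hz2]
      rw [aux_sandwich]
    refine ⟨z 0 0, ?_⟩
    apply hSinj
    rw [← hS, ← hz3, hφz]
    calc t * (u * single 0 0 e * t) * u
        = (t * u) * single 0 0 e * (t * u) := by noncomm_ring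
      _ = single 0 0 e := by rw [htu]; noncomm_ring
  have hinj : Function.Injective ψ₀ := ψhom.injective
  refine ⟨⟨u, t, hut, htu⟩, RingEquiv.ofBijective ψhom ⟨hinj, hsurj⟩, ?_⟩
  intro x
  have hcoe : ⇑(RingEquiv.ofBijective ψhom ⟨hinj, hsurj⟩) = ψ₀ := rfl
  have hval : (⟨u, t, hut, htu⟩ : (Matrix (Fin n) (Fin n) F)ˣ).val = u := rfl
  have hinvval : ((⟨u, t, hut, htu⟩ : (Matrix (Fin n) (Fin n) F)ˣ)⁻¹).val = t := rfl
  rw [hval, hinvval, hcoe]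
  -- key per-entry identity
  have key : ∀ (i j : Fin n) (d : F),
      φ (single i j d) = u * single i j (ψ₀ d) * t := by
    intro i j d
    have hdecomp : ∀ e : F, single i j e =
        (single i 0 (1:F) : Matrix (Fin n) (Fin n) F) *
        (single 0 0 e : Matrix (Fin n) (Fin n) F) *
        (single 0 j (1:F) : Matrix (Fin n) (Fin n) F) := by
      intro e
      rw [Matrix.single_mul_single_same, Matrix.single_mul_single_same, one_mul, mul_one]
    have hrhs : u * single i j (ψ₀ d) * t
        = φ (single i 0 1) * φ (single 0 0 d) * φ (single 0 j 1) := by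
      calc u * single i j (ψ₀ d) * t
          = u * ((single i 0 (1:F) : Matrix (Fin n) (Fin n) F) *
              (single 0 0 (ψ₀ d) : Matrix (Fin n) (Fin n) F) *
              (single 0 j (1:F) : Matrix (Fin n) (Fin n) F)) * t := by rw [← hdecomp]
        _ = u * ((single i 0 (1:F) : Matrix (Fin n) (Fin n) F) *
              (t * φ (single 0 0 d) * u) *
              (single 0 j (1:F) : Matrix (Fin n) (Fin n) F)) * t := by rw [hS]
        _ = (u * single i 0 (1:F)) * (t * φ (single 0 0 d) * u) *
              (single 0 j (1:F) * t) := by noncomm_ring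
        _ = (φ (single i 0 1) * u) * (t * φ (single 0 0 d) * u) *
              (t * φ (single 0 j 1)) := by rw [← hfu, ← htf]
        _ = φ (single i 0 1) * ((u * t) * φ (single 0 0 d) * (u * t)) *
              φ (single 0 j 1) := by noncomm_ring
        _ = φ (single i 0 1) * φ (single 0 0 d) * φ (single 0 j 1) := by
              rw [hut]; noncomm_ring
    rw [hrhs, hdecomp d, _root_.map_mul, _root_.map_mul]
  -- put everything together
  have hmap : x.map ψ₀ = ∑ i : Fin n, ∑ j : Fin n, single i j (ψ₀ (x i j)) := by
    conv_lhs => rw [matrix_eq_sum_single (x.map ψ₀)]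
    simp [Matrix.map_apply]
  calc φ x = φ (∑ i : Fin n, ∑ j : Fin n, single i j (x i j)) := by
        rw [← matrix_eq_sum_single]
    _ = ∑ i : Fin n, ∑ j : Fin n, φ (single i j (x i j)) := by
        simp only [_root_.map_sum]
    _ = ∑ i : Fin n, ∑ j : Fin n, u * single i j (ψ₀ (x i j)) * t := by
        simp only [key]
    _ = u * (∑ i : Fin n, ∑ j : Fin n, single i j (ψ₀ (x i j))) * t := by
        simp only [Finset.mul_sum, Finset.sum_mul]
    _ = u * x.map ψ₀ * t := by rw [← hmap]
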